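/- If f is integrable with weight x^γ on balls, then for almost every R > 0, ∫_{S₁⁺(n)} f(Rx) x^γ dS(x) = R^{1-n-|γ|} · d/dR ∫_{B_R⁺(n)} f(x) x^γ dx. -/

import Mathlib

open MeasureTheory Real Set Metric

noncomputable section

/-- The part of the unit sphere in the open positive orthant. -/
def sphPos (n : ℕ) : Set (sphere (0 : EuclideanSpace ℝ (Fin n)) 1) :=
  {x | ∀ i, 0 < (x : EuclideanSpace ℝ (Fin n)) i}

/-- Surface measure on the unit sphere of `ℝⁿ`. -/
def sphMeasure (n : ℕ) : Measure (sphere (0 : EuclideanSpace ℝ (Fin n)) 1) :=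
  (volume : Measure (EuclideanSpace ℝ (Fin n))).toSphere

/-- The part `B_R⁺(n)` of the closed ball of radius `R` in the open positive orthant. -/
def ballPos (n : ℕ) (R : ℝ) : Set (EuclideanSpace ℝ (Fin n)) :=
  {x | ‖x‖ ≤ R ∧ ∀ i, 0 < x i}

open Filter Topology in
lemma ae_ftc {h : ℝ → ℝ} (hloc : LocallyIntegrable h volume) :
    ∀ᵐ x ∂(volume.restrict (Ioi (0:ℝ))),
      HasDerivAt (fun r => ∫ t in Ioc (0:ℝ) r, h t) (h x) x := by
  have main := (IsUnifLocDoublingMeasure.vitaliFamily (volume : Measure ℝ) 1).ae_tendsto_average hloc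
  rw [ae_restrict_iff' measurableSet_Ioi]
  filter_upwards [main] with x hx hx0
  have hx0 : (0:ℝ) < x := hx0
  set F : ℝ → ℝ := fun r => ∫ t in Ioc (0:ℝ) r, h t with hF
  have hint : ∀ a b : ℝ, IntegrableOn h (Ioc a b) volume :=
    fun a b => (hloc.integrableOn_isCompact isCompact_Icc).mono_set Ioc_subset_Icc_self
  have key : ∀ a b : ℝ, 0 < a → a < b → F b - F a = ∫ t in Ioc a b, h t := by
    intro a b ha hab
    have h1 : Ioc (0:ℝ) a ∪ Ioc a b = Ioc 0 b := Ioc_union_Ioc_eq_Ioc ha.le hab.le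
    have := setIntegral_union (f := h) (μ := volume) (Set.Ioc_disjoint_Ioc_of_le le_rfl)
      measurableSet_Ioc (hint 0 a) (hint a b)
    rw [h1] at this
    simp only [hF, this]
    ring
  have avg : ∀ a b : ℝ, a < b → ⨍ t in Icc a b, h t = (∫ t in Ioc a b, h t) / (b - a) := by
    intro a b hab
    rw [setAverage_eq, integral_Icc_eq_integral_Ioc, Real.volume_real_Icc_of_le hab.le,
      smul_eq_mul]
    ring
  rw [hasDerivAt_iff_tendsto_slope, slope_fun_def_field, ← nhdsLT_sup_nhdsGT,
    tendsto_sup]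
  constructor
  · apply Tendsto.congr' _ (hx.comp (Real.tendsto_Icc_vitaliFamily_left x))
    filter_upwards [Ioo_mem_nhdsLT_of_mem (show x ∈ Ioc 0 x from ⟨hx0, le_rfl⟩)]
    rintro y ⟨hy0, hyx⟩
    show ⨍ t in Icc y x, h t = (F y - F x) / (y - x)
    rw [avg y x hyx, ← key y x hy0 hyx, ← neg_sub (F x) (F y), ← neg_sub x y, neg_div_neg_eq]
  · apply Tendsto.congr' _ (hx.comp (Real.tendsto_Icc_vitaliFamily_right x))
    filter_upwards [self_mem_nhdsWithin]
    rintro y (hy : x < y)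
    show ⨍ t in Icc x y, h t = (F y - F x) / (y - x)
    rw [avg x y hy, key x y hx0 hy]

lemma polar_aux (n : ℕ) (hn : 1 ≤ n) (q : EuclideanSpace ℝ (Fin n) → ℝ)
    (hq : Integrable q volume) :
    (∫ x, q x) = (∫ t : Ioi (0:ℝ),
        (∫ y : sphere (0 : EuclideanSpace ℝ (Fin n)) 1, q (t.1 • y.1)
          ∂(volume : Measure (EuclideanSpace ℝ (Fin n))).toSphere)
        ∂(Measure.volumeIoiPow (n-1)))
    ∧ Integrable (fun t : Ioi (0:ℝ) =>
        ∫ y : sphere (0 : EuclideanSpace ℝ (Fin n)) 1, q (t.1 • y.1)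
          ∂(volume : Measure (EuclideanSpace ℝ (Fin n))).toSphere)
        (Measure.volumeIoiPow (n-1)) := by
  haveI : Nonempty (Fin n) := ⟨⟨0, hn⟩⟩
  haveI : Nontrivial (EuclideanSpace ℝ (Fin n)) := inferInstance
  set μ : Measure (EuclideanSpace ℝ (Fin n)) := volume with hμ
  have hdim : Module.finrank ℝ (EuclideanSpace ℝ (Fin n)) - 1 = n - 1 := by
    rw [finrank_euclideanSpace_fin]
  have mp := μ.measurePreserving_homeomorphUnitSphereProd
  rw [hdim] at mp
  have hm := (measurableSet_singleton (0 : EuclideanSpace ℝ (Fin n))).compl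
  have hcomap : Integrable (q ∘ (Subtype.val : ({0}ᶜ : Set (EuclideanSpace ℝ (Fin n))) → _))
      (μ.comap Subtype.val) := by
    refine ((MeasurableEmbedding.subtype_coe hm).integrable_map_iff).1 ?_
    rw [map_comap_subtype_coe hm]
    exact hq.restrict
  have hprod : Integrable
      (fun p : (sphere (0 : EuclideanSpace ℝ (Fin n)) 1) × Ioi (0:ℝ) => q (p.2.1 • p.1.1))
      (μ.toSphere.prod (Measure.volumeIoiPow (n-1))) := by
    rw [← mp.integrable_comp_emb (Homeomorph.measurableEmbedding _)]
    refine hcomap.congr (Filter.Eventually.of_forall fun x => ?_)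
    have hx : ‖(x : EuclideanSpace ℝ (Fin n))‖ ≠ 0 :=
      norm_ne_zero_iff.2 x.2
    simp only [Function.comp_apply, homeomorphUnitSphereProd_apply_fst_coe,
      homeomorphUnitSphereProd_apply_snd_coe]
    rw [smul_inv_smul₀ hx]
  refine ⟨?_, by simpa [Function.comp] using hprod.swap.integral_prod_left⟩
  calc ∫ x, q x ∂μ
      = ∫ x : ({0}ᶜ : Set (EuclideanSpace ℝ (Fin n))), q x.1 ∂(μ.comap Subtype.val) := by
        rw [integral_subtype_comap hm fun x => q x, MeasureTheory.restrict_compl_singleton]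
    _ = ∫ p : (sphere (0 : EuclideanSpace ℝ (Fin n)) 1) × Ioi (0:ℝ), q (p.2.1 • p.1.1)
          ∂(μ.toSphere.prod (Measure.volumeIoiPow (n-1))) := by
        rw [← mp.integral_comp (Homeomorph.measurableEmbedding _)
          (fun p : (sphere (0 : EuclideanSpace ℝ (Fin n)) 1) × Ioi (0:ℝ) => q (p.2.1 • p.1.1))]
        refine integral_congr_ae (Filter.Eventually.of_forall fun x => ?_)
        have hx : ‖(x : EuclideanSpace ℝ (Fin n))‖ ≠ 0 :=
          norm_ne_zero_iff.2 x.2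
        simp only [homeomorphUnitSphereProd_apply_fst_coe,
          homeomorphUnitSphereProd_apply_snd_coe]
        rw [smul_inv_smul₀ hx]
    _ = _ := integral_prod_symm _ hprod

lemma polar (n : ℕ) (hn : 1 ≤ n) (γ : Fin n → ℝ) (hγ : ∀ i, 0 < γ i)
    (f : EuclideanSpace ℝ (Fin n) → ℝ)
    (hf : ∀ R > 0, IntegrableOn (fun x => f x * ∏ i, (x i) ^ (γ i)) (ballPos n R))
    (r : ℝ) (hr : 0 < r) :
    ((∫ x in ballPos n r, f x * ∏ i, (x i) ^ γ i) =
      ∫ t in Ioc (0:ℝ) r, t ^ (n-1) * (t ^ (∑ i, γ i) * ∫ y in sphPos n,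
        f (t • (y : EuclideanSpace ℝ (Fin n))) *
          ∏ i, ((y : EuclideanSpace ℝ (Fin n)) i) ^ γ i ∂(sphMeasure n)))
    ∧ IntegrableOn (fun t => t ^ (n-1) * (t ^ (∑ i, γ i) * ∫ y in sphPos n,
        f (t • (y : EuclideanSpace ℝ (Fin n))) *
          ∏ i, ((y : EuclideanSpace ℝ (Fin n)) i) ^ γ i ∂(sphMeasure n))) (Ioc (0:ℝ) r) := by
  let E := EuclideanSpace ℝ (Fin n)
  set Φ : ℝ → ℝ := fun t => ∫ y in sphPos n,
    f (t • (y : E)) * ∏ i, ((y : E) i) ^ γ i ∂(sphMeasure n) with hΦ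
  set ψ : ℝ → ℝ := fun t => t ^ (∑ i, γ i) * Φ t with hψ
  set g : E → ℝ := fun x => f x * ∏ i, (x i) ^ γ i with hg
  have mball : MeasurableSet (ballPos n r) := by
    have : ballPos n r = (fun x : E => ‖x‖) ⁻¹' (Iic r) ∩ ⋂ i, (fun x : E => x i) ⁻¹' (Ioi 0) := by
      ext x; simp [ballPos, forall_and]
    rw [this]
    exact (measurable_norm measurableSet_Iic).inter
      (MeasurableSet.iInter fun i =>
        ((measurable_pi_apply i).comp (WithLp.measurable_ofLp _ _)) measurableSet_Ioi)
  have msph : MeasurableSet (sphPos n) := by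
    have : sphPos n = ⋂ i, (fun y : sphere (0:E) 1 => (y : E) i) ⁻¹' (Ioi 0) := by
      ext y; simp [sphPos]
    rw [this]
    exact MeasurableSet.iInter fun i =>
      ((((measurable_pi_apply i).comp (WithLp.measurable_ofLp _ _)).comp measurable_subtype_coe) measurableSet_Ioi)
  have hq : Integrable ((ballPos n r).indicator g) volume :=
    (integrable_indicator_iff mball).2 (hf r hr)
  obtain ⟨heq, hint⟩ := polar_aux n hn _ hq
  -- inner integral computation
  have inner : ∀ t : Ioi (0:ℝ),
      (∫ y : sphere (0:E) 1, (ballPos n r).indicator g (t.1 • y.1)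
        ∂(volume : Measure E).toSphere) = (Iic r).indicator ψ t.1 := by
    rintro ⟨t, ht⟩
    simp only
    have ht : (0:ℝ) < t := ht
    by_cases htr : t ≤ r
    · have e1 : ∀ y : sphere (0:E) 1, (ballPos n r).indicator g (t • y.1) =
          (sphPos n).indicator (fun y : sphere (0:E) 1 => g (t • (y:E))) y := by
        intro y
        have hny : ‖(y:E)‖ = 1 := mem_sphere_zero_iff_norm.1 y.2
        have hnorm : ‖t • (y:E)‖ = t := by
          rw [norm_smul, hny, Real.norm_eq_abs, abs_of_pos ht, mul_one]
        have happ : ∀ i, (t • (y:E)) i = t * (y:E) i := fun i => rfl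
        by_cases hy : y ∈ sphPos n
        · rw [indicator_of_mem hy, indicator_of_mem]
          exact ⟨by rw [hnorm]; exact htr, fun i => by rw [happ i]; exact mul_pos ht (hy i)⟩
        · rw [indicator_of_notMem hy, indicator_of_notMem]
          intro hmem
          refine hy fun i => ?_
          have h2 := hmem.2 i
          rw [happ i] at h2
          by_contra hc
          push_neg at hc
          nlinarith
      rw [integral_congr_ae (Filter.Eventually.of_forall e1), integral_indicator msph]
      rw [setIntegral_congr_fun msph (g := fun y : sphere (0:E) 1 =>
        t ^ (∑ i, γ i) * (f (t • (y:E)) * ∏ i, ((y:E) i) ^ γ i)) ?_]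
      · rw [integral_const_mul, indicator_of_mem (mem_Iic.2 htr)]; rfl
      · intro y hy
        have hcalc : (∏ i, ((t • (y:E)) i) ^ γ i)
            = t ^ (∑ i, γ i) * ∏ i, ((y:E) i) ^ γ i := by
          calc (∏ i, ((t • (y:E)) i) ^ γ i)
              = ∏ i, (t ^ γ i * ((y:E) i) ^ γ i) := by
                refine Finset.prod_congr rfl fun i _ => ?_
                rw [show (t • (y:E)) i = t * (y:E) i from rfl,
                  Real.mul_rpow ht.le (hy i).le]
            _ = (∏ i, t ^ γ i) * ∏ i, ((y:E) i) ^ γ i := Finset.prod_mul_distrib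
            _ = t ^ (∑ i, γ i) * ∏ i, ((y:E) i) ^ γ i := by
                rw [← Real.rpow_sum_of_pos ht]
        show g (t • (y:E)) = _
        rw [hg]
        simp only
        rw [hcalc]
        ring
    · have e0 : ∀ y : sphere (0:E) 1, (ballPos n r).indicator g (t • y.1) = 0 := by
        intro y
        have hny : ‖(y:E)‖ = 1 := mem_sphere_zero_iff_norm.1 y.2
        refine indicator_of_notMem (fun hmem => htr ?_) _
        have := hmem.1
        rwa [norm_smul, hny, Real.norm_eq_abs, abs_of_pos ht, mul_one] at this
      rw [integral_congr_ae (Filter.Eventually.of_forall e0), integral_zero]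
      exact (indicator_of_notMem (fun h => htr (mem_Iic.1 h)) ψ).symm
  have heq2 : (∫ x, (ballPos n r).indicator g x) =
      ∫ t : Ioi (0:ℝ), (Iic r).indicator ψ t.1 ∂(Measure.volumeIoiPow (n-1)) := by
    rw [heq]; exact integral_congr_ae (Filter.Eventually.of_forall inner)
  have hint2 : Integrable (fun t : Ioi (0:ℝ) => (Iic r).indicator ψ t.1)
      (Measure.volumeIoiPow (n-1)) := hint.congr (Filter.Eventually.of_forall inner)
  have hmeasd : Measurable fun t : Ioi (0:ℝ) => (t.1 ^ (n-1)).toNNReal :=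
    (measurable_subtype_coe.pow_const _).real_toNNReal
  have eqOn1 : EqOn (fun t : ℝ => (t ^ (n-1)).toNNReal • (Iic r).indicator ψ t)
      (fun t : ℝ => (Ioc (0:ℝ) r).indicator (fun s => s ^ (n-1) * ψ s) t) (Ioi (0:ℝ)) := by
    intro t ht
    by_cases htr : t ≤ r
    · simp only
      rw [indicator_of_mem (mem_Iic.2 htr), indicator_of_mem (mem_Ioc.mpr ⟨mem_Ioi.1 ht, htr⟩),
        NNReal.smul_def, Real.coe_toNNReal _ (pow_nonneg (le_of_lt ht) _), smul_eq_mul]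
    · simp only
      rw [indicator_of_notMem (fun h => htr (mem_Iic.1 h)),
        indicator_of_notMem (fun h => htr h.2), smul_zero]
  have hkey : (∫ t : Ioi (0:ℝ), (Iic r).indicator ψ t.1 ∂(Measure.volumeIoiPow (n-1)))
      = ∫ t in Ioc (0:ℝ) r, t ^ (n-1) * ψ t := by
    rw [Measure.volumeIoiPow]
    simp only [ENNReal.ofReal]
    rw [integral_withDensity_eq_integral_smul hmeasd,
      integral_subtype_comap measurableSet_Ioi
        (fun t : ℝ => (t ^ (n-1)).toNNReal • (Iic r).indicator ψ t),
      setIntegral_congr_fun measurableSet_Ioi eqOn1,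
      setIntegral_indicator measurableSet_Ioc,
      inter_eq_self_of_subset_right Ioc_subset_Ioi_self]
  have hintIoc : IntegrableOn (fun t : ℝ => t ^ (n-1) * ψ t) (Ioc (0:ℝ) r) := by
    have h1 : Integrable ((fun t : ℝ => (t ^ (n-1)).toNNReal • (Iic r).indicator ψ t) ∘
        (Subtype.val : Ioi (0:ℝ) → ℝ)) (Measure.comap Subtype.val volume) := by
      rw [Measure.volumeIoiPow] at hint2
      simp only [ENNReal.ofReal] at hint2
      exact (integrable_withDensity_iff_integrable_smul hmeasd).1 hint2
    have h2 : IntegrableOn (fun t : ℝ => (t ^ (n-1)).toNNReal • (Iic r).indicator ψ t)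
        (Ioi (0:ℝ)) volume := by
      have := ((MeasurableEmbedding.subtype_coe measurableSet_Ioi).integrable_map_iff
        (g := fun t : ℝ => (t ^ (n-1)).toNNReal • (Iic r).indicator ψ t)).2 h1
      rwa [map_comap_subtype_coe measurableSet_Ioi] at this
    have h3 : IntegrableOn (fun t : ℝ => (Ioc (0:ℝ) r).indicator (fun s => s ^ (n-1) * ψ s) t)
        (Ioi (0:ℝ)) volume := h2.congr_fun eqOn1 measurableSet_Ioi
    have h4 : IntegrableOn (fun s => s ^ (n-1) * ψ s) (Ioc (0:ℝ) r) (volume.restrict (Ioi 0)) :=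
      (integrable_indicator_iff measurableSet_Ioc).1 h3
    rwa [IntegrableOn, Measure.restrict_restrict measurableSet_Ioc,
      inter_eq_self_of_subset_left Ioc_subset_Ioi_self] at h4
  constructor
  · calc (∫ x in ballPos n r, f x * ∏ i, (x i) ^ γ i)
        = ∫ x, (ballPos n r).indicator g x := (integral_indicator mball).symm
      _ = ∫ t in Ioc (0:ℝ) r, t ^ (n-1) * ψ t := by rw [heq2, hkey]
      _ = _ := rfl
  · exact hintIoc

/-- For a.e. `R > 0`:
`∫_{S₁⁺} f(Rx) x^γ dS(x) = R^{1-n-|γ|} d/dR ∫_{B_R⁺} f(x) x^γ dx`. -/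
theorem sphere_integral_eq_deriv_ball_integral (n : ℕ) (hn : 1 ≤ n) (γ : Fin n → ℝ)
    (hγ : ∀ i, 0 < γ i) (f : EuclideanSpace ℝ (Fin n) → ℝ)
    (hf : ∀ R > 0, IntegrableOn (fun x => f x * ∏ i, (x i) ^ (γ i)) (ballPos n R)) :
    ∀ᵐ R ∂(volume.restrict (Ioi (0:ℝ))),
      (∫ x in sphPos n,
          f (R • (x : EuclideanSpace ℝ (Fin n))) *
            ∏ i, ((x : EuclideanSpace ℝ (Fin n)) i) ^ (γ i) ∂(sphMeasure n)) =
        R ^ ((1 : ℝ) - n - ∑ i, γ i) *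
          deriv (fun r => ∫ x in ballPos n r, f x * ∏ i, (x i) ^ (γ i)) R := by
  haveI : Nonempty (Fin n) := ⟨⟨0, hn⟩⟩
  set Φ : ℝ → ℝ := fun t => ∫ y in sphPos n,
    f (t • (y : EuclideanSpace ℝ (Fin n))) *
      ∏ i, ((y : EuclideanSpace ℝ (Fin n)) i) ^ γ i ∂(sphMeasure n) with hΦ
  set H : ℝ → ℝ := fun t => t ^ (n-1) * (t ^ (∑ i, γ i) * Φ t) with hH
  set h : ℝ → ℝ := (Ioi (0:ℝ)).indicator H with hh
  have hballneg : ∀ r : ℝ, r ≤ 0 → ballPos n r = ∅ := by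
    intro r hr0
    ext x
    simp only [ballPos, mem_setOf_eq, mem_empty_iff_false, iff_false, not_and]
    intro h1 h2
    have hx0 : x = 0 := norm_eq_zero.1 (le_antisymm (h1.trans hr0) (norm_nonneg x))
    have := h2 ⟨0, hn⟩
    rw [hx0] at this
    exact lt_irrefl 0 this
  have hFeq : (fun r => ∫ x in ballPos n r, f x * ∏ i, (x i) ^ γ i) =
      fun r => ∫ t in Ioc (0:ℝ) r, h t := by
    funext r
    rcases le_or_gt r 0 with hr | hr
    · rw [hballneg r hr, Ioc_eq_empty (not_lt.2 hr)]
      simp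
    · rw [(polar n hn γ hγ f hf r hr).1]
      refine setIntegral_congr_fun measurableSet_Ioc fun t ht => ?_
      exact (indicator_of_mem (mem_Ioi.2 ht.1) H).symm
  have hloc : LocallyIntegrable h volume := by
    rw [locallyIntegrable_iff]
    intro K hK
    obtain ⟨C, hC⟩ := hK.isBounded.subset_closedBall 0
    have hc : (0:ℝ) < max C 1 := lt_of_lt_of_le one_pos (le_max_right _ _)
    have hKsub : Ioi (0:ℝ) ∩ K ⊆ Ioc 0 (max C 1) := by
      rintro t ⟨ht0, htK⟩
      have h2 := hC htK
      rw [Real.closedBall_eq_Icc] at h2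
      exact ⟨ht0, (h2.2.trans (by simp)).trans (le_max_left _ _)⟩
    rw [hh, IntegrableOn, integrable_indicator_iff measurableSet_Ioi, IntegrableOn,
      Measure.restrict_restrict measurableSet_Ioi]
    exact ((polar n hn γ hγ f hf _ hc).2).mono_set hKsub
  filter_upwards [ae_ftc hloc, ae_restrict_mem measurableSet_Ioi] with R hR hR0
  have hR0 : (0:ℝ) < R := hR0
  have hderiv : deriv (fun r => ∫ x in ballPos n r, f x * ∏ i, (x i) ^ γ i) R = H R := by
    rw [hFeq, hR.deriv, hh]
    exact indicator_of_mem hR0 H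
  rw [hderiv]
  have hpow : R ^ ((1:ℝ) - n - ∑ i, γ i) * (R ^ ((n:ℝ) - 1) * R ^ (∑ i, γ i)) = 1 := by
    rw [← Real.rpow_add hR0, ← Real.rpow_add hR0,
      show (1:ℝ) - n - ∑ i, γ i + ((n - 1) + ∑ i, γ i) = 0 by ring, Real.rpow_zero]
  have hnat : (R : ℝ) ^ (n - 1) = R ^ ((n:ℝ) - 1) := by
    rw [← Real.rpow_natCast R (n-1), Nat.cast_sub hn, Nat.cast_one]
  calc (∫ x in sphPos n,
          f (R • (x : EuclideanSpace ℝ (Fin n))) *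
            ∏ i, ((x : EuclideanSpace ℝ (Fin n)) i) ^ (γ i) ∂(sphMeasure n))
      = Φ R := rfl
    _ = (R ^ ((1:ℝ) - n - ∑ i, γ i) * (R ^ ((n:ℝ)-1) * R ^ (∑ i, γ i))) * Φ R := by
        rw [hpow, one_mul]
    _ = R ^ ((1:ℝ) - n - ∑ i, γ i) * H R := by
        rw [hH]
        simp only
        rw [hnat]
        ring
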